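/- Let D₁*, ..., D_m* be i.i.d. nonnegative integer random variables with P(D* > x) ≤ x^{-(τ-2)} L(x), with τ ∈ (2,3) and L(x) ≤ exp(C(log x)^η), η ∈ (0,1), L nondecreasing. Set M_m = (m·h(m))^{1/(τ-2)} where h(m) = exp((2C'/(τ-2)^η)(log m)^η) for C' ≥ C. Then P(Σ_{i=1}^m D_i* ≥ M_m) ≤ (C''+1) L(M_m)/h(m) for a constant C'' depending only on τ, and consequently P(Σ D_i* ≥ M_m) ≤ K exp(−c (log m)^η) for constants K, c > 0 depending only on τ, C, C', η. -/

import Mathlib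

set_option maxHeartbeats 1000000

open Real MeasureTheory ProbabilityTheory
open scoped ENNReal NNReal


/-- Subadditivity of rpow for exponent in [0,1]. -/
lemma aux_rpow_add_le {x y p : ℝ} (hx : 0 ≤ x) (hy : 0 ≤ y) (hp0 : 0 ≤ p) (hp1 : p ≤ 1) :
    (x + y) ^ p ≤ x ^ p + y ^ p := by
  have h := NNReal.rpow_add_le_add_rpow x.toNNReal y.toNNReal hp0 hp1
  have hc : ((x.toNNReal + y.toNNReal : NNReal) : ℝ) = x + y := by
    simp [Real.coe_toNNReal, hx, hy]
  calc (x + y) ^ p = ((x.toNNReal + y.toNNReal : NNReal) : ℝ) ^ p := by rw [hc]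
    _ = ((x.toNNReal + y.toNNReal : NNReal) ^ p : NNReal) := by
        rw [← NNReal.coe_rpow]
    _ ≤ ((x.toNNReal ^ p + y.toNNReal ^ p : NNReal) : ℝ) := by exact_mod_cast h
    _ = x ^ p + y ^ p := by
        push_cast [NNReal.coe_rpow, Real.coe_toNNReal, hx, hy]
        simp [Real.coe_toNNReal, hx, hy]

/-- `s ^ η ≤ s + 1` for `s ≥ 0`, `0 ≤ η ≤ 1`. -/
lemma aux_rpow_le_add_one {s η : ℝ} (hs : 0 ≤ s) (hη0 : 0 ≤ η) (hη1 : η ≤ 1) :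
    s ^ η ≤ s + 1 := by
  rcases le_total s 1 with h | h
  · have : s ^ η ≤ 1 := Real.rpow_le_one hs h hη0
    linarith
  · have : s ^ η ≤ s ^ (1:ℝ) := Real.rpow_le_rpow_of_exponent_le h hη1
    rw [Real.rpow_one] at this
    linarith

/-- Young-type bound: `B * s^η ≤ a * s + B * (2 + s₀)` with `s₀ = (B/a)^(1/(1-η))`. -/
lemma aux_young {B a s η : ℝ} (hB : 0 ≤ B) (ha : 0 < a) (hs : 0 ≤ s)
    (hη0 : 0 < η) (hη1 : η < 1) :
    B * s ^ η ≤ a * s + B * (2 + (B / a) ^ (1 / (1 - η))) := by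
  set s₀ : ℝ := (B / a) ^ (1 / (1 - η)) with hs₀
  have hs₀0 : 0 ≤ s₀ := Real.rpow_nonneg (by positivity) _
  rcases le_total s (s₀ + 1) with h | h
  · have h1 : s ^ η ≤ s + 1 := aux_rpow_le_add_one hs hη0.le hη1.le
    have : B * s ^ η ≤ B * (s₀ + 2) := by
      apply mul_le_mul_of_nonneg_left _ hB
      linarith
    nlinarith [mul_nonneg ha.le hs]
  · -- s ≥ s₀ + 1 ≥ 1, so s^(1-η) ≥ s₀^(1-η) = B/a
    have hs1 : 1 ≤ s := by linarith
    have hpow : s₀ ^ (1 - η) = B / a := by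
      rw [hs₀, ← Real.rpow_mul (by positivity)]
      rw [one_div, inv_mul_cancel₀ (by linarith : (1:ℝ) - η ≠ 0), Real.rpow_one]
    have hmono : s₀ ^ (1 - η) ≤ s ^ (1 - η) :=
      Real.rpow_le_rpow hs₀0 (by linarith) (by linarith)
    have hBa : B / a ≤ s ^ (1 - η) := hpow ▸ hmono
    have hkey : B * s ^ η ≤ a * s := by
      have hsplit : s ^ (1 - η) * s ^ η = s := by
        rw [← Real.rpow_add (by linarith : (0:ℝ) < s)]; norm_num
      have h2 : B * s ^ η ≤ (a * s ^ (1 - η)) * s ^ η := by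
        apply mul_le_mul_of_nonneg_right _ (Real.rpow_nonneg (by linarith) _)
        rw [div_le_iff₀ ha] at hBa; linarith [hBa]
      calc B * s ^ η ≤ (a * s ^ (1 - η)) * s ^ η := h2
        _ = a * (s ^ (1 - η) * s ^ η) := by ring
        _ = a * s := by rw [hsplit]
    have : 0 ≤ B * (2 + s₀) := by positivity
    linarith

/-- Sum bound: `∑_{k<N} (k+1)^(-p) ≤ N^(1-p)/(1-p)` for `0 < p < 1`. -/
lemma aux_sum_rpow {p : ℝ} (hp0 : 0 < p) (hp1 : p < 1) (N : ℕ) :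
    ∑ k ∈ Finset.range N, ((k : ℝ) + 1) ^ (-p) ≤ (N : ℝ) ^ (1 - p) / (1 - p) := by
  induction N with
  | zero => simp [Real.zero_rpow (by linarith : (1:ℝ) - p ≠ 0)]
  | succ N ih =>
    rw [Finset.sum_range_succ]
    have hstep : (1 - p) * ((N : ℝ) + 1) ^ (-p) ≤ ((N : ℝ) + 1) ^ (1 - p) - (N : ℝ) ^ (1 - p) := by
      have hN1 : (0:ℝ) < (N : ℝ) + 1 := by positivity
      -- Bernoulli: (N/(N+1))^(1-p) ≤ 1 - (1-p)/(N+1)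
      have hb : ((N : ℝ) / ((N : ℝ) + 1)) ^ (1 - p) ≤ 1 - (1 - p) / ((N : ℝ) + 1) := by
        have := _root_.rpow_one_add_le_one_add_mul_self
          (s := -(1 / ((N : ℝ) + 1))) (p := 1 - p)
          (by rw [neg_le, neg_neg]; rw [div_le_one hN1]; linarith)
          (by linarith) (by linarith)
        have he : (1 : ℝ) + -(1 / ((N : ℝ) + 1)) = (N : ℝ) / ((N : ℝ) + 1) := by
          field_simp
          ring
        rw [he] at this
        calc ((N : ℝ) / ((N : ℝ) + 1)) ^ (1 - p) ≤ 1 + (1 - p) * -(1 / ((N:ℝ)+1)) := this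
          _ = 1 - (1 - p) / ((N : ℝ) + 1) := by ring
      have hmul := mul_le_mul_of_nonneg_right hb
        (Real.rpow_nonneg hN1.le (1 - p))
      rw [Real.div_rpow (Nat.cast_nonneg N) hN1.le] at hmul
      rw [div_mul_cancel₀ _ (by positivity : ((N:ℝ)+1) ^ (1-p) ≠ 0)] at hmul
      have hkey : (1 - p) / ((N:ℝ)+1) * ((N:ℝ)+1) ^ (1 - p) = (1 - p) * ((N:ℝ)+1) ^ (-p) := by
        rw [div_mul_eq_mul_div, mul_div_assoc]
        congr 1
        rw [← Real.rpow_sub_one (by positivity)]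
        norm_num
      nlinarith [hmul, hkey]
    have hdiv : ((N : ℝ) + 1) ^ (-p) ≤
        (((N : ℝ) + 1) ^ (1 - p) - (N : ℝ) ^ (1 - p)) / (1 - p) := by
      rw [le_div_iff₀ (by linarith : (0:ℝ) < 1 - p)]
      linarith [hstep]
    push_cast
    have : ((N:ℝ) ^ (1-p)) / (1-p) + (((N:ℝ)+1) ^ (1-p) - (N:ℝ) ^ (1-p)) / (1-p)
        = ((N:ℝ)+1) ^ (1-p) / (1-p) := by ring
    linarith [ih, hdiv]

/-- Layer-cake bound for a bounded ℕ-valued function. -/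
lemma aux_layer {Ω : Type} [MeasurableSpace Ω] (μ : Measure Ω) (Z : Ω → ℝ) (hZ : Measurable Z)
    (N : ℕ) (hnat : ∀ ω, ∃ z : ℕ, Z ω = z ∧ z ≤ N) :
    ∫⁻ ω, ENNReal.ofReal (Z ω) ∂μ ≤ ∑ k ∈ Finset.range N, μ {ω | (k : ℝ) < Z ω} := by
  have hms : ∀ k : ℕ, MeasurableSet {ω | (k : ℝ) < Z ω} :=
    fun k => measurableSet_lt measurable_const hZ
  have hpt : ∀ ω, ENNReal.ofReal (Z ω) ≤
      ∑ k ∈ Finset.range N, ({ω | (k : ℝ) < Z ω}).indicator (fun _ => (1 : ℝ≥0∞)) ω := by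
    intro ω
    obtain ⟨z, hz, hzN⟩ := hnat ω
    have h0 : ENNReal.ofReal (Z ω) = (z : ℝ≥0∞) := by
      rw [hz, ENNReal.ofReal_natCast]
    rw [h0]
    calc (z : ℝ≥0∞) = ∑ _k ∈ Finset.range z, 1 := by simp
      _ = ∑ k ∈ Finset.range z, ({ω | (k : ℝ) < Z ω}).indicator (fun _ => (1 : ℝ≥0∞)) ω := by
          refine Finset.sum_congr rfl fun k hk => ?_
          rw [Finset.mem_range] at hk
          have hmem : ω ∈ {ω | (k : ℝ) < Z ω} := by
            simp only [Set.mem_setOf_eq, hz]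
            exact_mod_cast hk
          rw [Set.indicator_of_mem hmem]
      _ ≤ _ := Finset.sum_le_sum_of_subset (Finset.range_subset_range.2 hzN)
  calc ∫⁻ ω, ENNReal.ofReal (Z ω) ∂μ
      ≤ ∫⁻ ω, ∑ k ∈ Finset.range N, ({ω | (k : ℝ) < Z ω}).indicator (fun _ => (1 : ℝ≥0∞)) ω ∂μ :=
        lintegral_mono hpt
    _ = ∑ k ∈ Finset.range N, ∫⁻ ω, ({ω | (k : ℝ) < Z ω}).indicator (fun _ => (1 : ℝ≥0∞)) ω ∂μ :=
        lintegral_finset_sum _ fun k _ => (measurable_const.indicator (hms k))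
    _ = ∑ k ∈ Finset.range N, μ {ω | (k : ℝ) < Z ω} := by
        refine Finset.sum_congr rfl fun k _ => ?_
        rw [lintegral_indicator (hms k)]
        simp

theorem stmt_11 (τ η C C' : ℝ) (hτ1 : 2 < τ) (hτ2 : τ < 3)
    (hη0 : 0 < η) (hη1 : η < 1) (hC : 0 < C) (hCC' : C ≤ C') :
    ∃ C'' > (0 : ℝ), ∃ K > (0 : ℝ), ∃ c₀ > (0 : ℝ),
      ∀ (m : ℕ), 2 ≤ m →
      ∀ {Ω : Type} [MeasurableSpace Ω] (μ : Measure Ω), IsProbabilityMeasure μ →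
      ∀ (X : Fin m → Ω → ℝ), (∀ i, Measurable (X i)) →
        (∀ i ω, 0 ≤ X i ω) → (∀ i ω, ∃ k : ℕ, X i ω = k) →
        iIndepFun X μ →
        (∀ i j, IdentDistrib (X i) (X j) μ μ) →
      ∀ (L : ℝ → ℝ), MonotoneOn L (Set.Ici (1 : ℝ)) →
        (∀ x : ℝ, 1 ≤ x → L x ≤ Real.exp (C * (Real.log x) ^ η)) →
        (∀ i, ∀ x : ℝ, 1 ≤ x →
          μ {ω | x < X i ω} ≤ ENNReal.ofReal (L x * x ^ (-(τ - 2)))) →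
        -- M_m = (m h(m))^{1/(τ-2)} with h(m) = exp((2C'/(τ-2)^η)(log m)^η)
        μ {ω | ((m : ℝ) * Real.exp ((2 * C' / (τ - 2) ^ η) * (Real.log m) ^ η)) ^ (1 / (τ - 2))
                ≤ ∑ i, X i ω}
          ≤ ENNReal.ofReal ((C'' + 1) *
              L (((m : ℝ) * Real.exp ((2 * C' / (τ - 2) ^ η) * (Real.log m) ^ η)) ^ (1 / (τ - 2))) /
              Real.exp ((2 * C' / (τ - 2) ^ η) * (Real.log m) ^ η)) ∧
        μ {ω | ((m : ℝ) * Real.exp ((2 * C' / (τ - 2) ^ η) * (Real.log m) ^ η)) ^ (1 / (τ - 2))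
                ≤ ∑ i, X i ω}
          ≤ ENNReal.ofReal (K * Real.exp (-c₀ * (Real.log m) ^ η)) := by
  have hC' : 0 < C' := lt_of_lt_of_le hC hCC'
  have hp0 : (0:ℝ) < τ - 2 := by linarith
  have hp1 : τ - 2 < 1 := by linarith
  have hq0 : (0:ℝ) < 3 - τ := by linarith
  set p : ℝ := τ - 2 with hpdef
  set r : ℝ := 2 ^ ((3 - τ) / p) with hrdef
  have hr1 : 1 < r := by
    rw [hrdef]
    exact (Real.one_lt_rpow_iff_of_pos (by norm_num)).2 (Or.inl ⟨one_lt_two, by positivity⟩)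
  have hpη : (0:ℝ) < p ^ η := Real.rpow_pos_of_pos hp0 η
  set A : ℝ := 2 * C' / p ^ η with hAdef
  have hA0 : 0 < A := by positivity
  set G : ℝ := C / p ^ η with hGdef
  have hG0 : 0 < G := by positivity
  have hGA : G ≤ A / 2 := by
    have hA2 : A / 2 = C' / p ^ η := by rw [hAdef]; ring
    rw [hA2, hGdef]
    gcongr
  set B : ℝ := G * A ^ η with hBdef
  have hB0 : 0 ≤ B := by positivity
  set s₀ : ℝ := (B / (A / 4)) ^ (1 / (1 - η)) with hs₀def
  have hs₀0 : 0 ≤ s₀ := Real.rpow_nonneg (by positivity) _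
  set C'' : ℝ := 2 ^ p + (1 / (3 - τ)) * (r / (r - 1)) with hC''def
  have h2p0 : (0:ℝ) < 2 ^ p := Real.rpow_pos_of_pos (by norm_num) p
  have hC''0 : 0 < C'' := by
    have : 0 < (1 / (3 - τ)) * (r / (r - 1)) := by
      apply mul_pos (by positivity)
      exact div_pos (by linarith) (by linarith)
    rw [hC''def]; linarith
  refine ⟨C'', hC''0, (C'' + 1) * Real.exp (B * (2 + s₀)), by positivity, A / 4, by positivity,
    ?_⟩
  intro m hm Ω inst μ hprob X hXmeas hXnn hXnat _hindep _hident L hLmono hLexp htail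
  have hm2 : (2:ℝ) ≤ (m:ℝ) := by exact_mod_cast hm
  have hm0 : (0:ℝ) < (m:ℝ) := by linarith
  set t : ℝ := Real.log m with htdef
  have ht0 : 0 < t := Real.log_pos (by exact_mod_cast (by omega : 1 < m))
  set hh : ℝ := Real.exp (A * t ^ η) with hhdef
  have hh0 : 0 < hh := Real.exp_pos _
  have hh1 : 1 ≤ hh := Real.one_le_exp (by positivity)
  set Mm : ℝ := ((m:ℝ) * hh) ^ (1 / p) with hMmdef
  have hmh0 : (0:ℝ) < (m:ℝ) * hh := by positivity
  have hMm0 : 0 < Mm := Real.rpow_pos_of_pos hmh0 _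
  have hMp : Mm ^ p = (m:ℝ) * hh := by
    rw [hMmdef, ← Real.rpow_mul hmh0.le, one_div, inv_mul_cancel₀ (ne_of_gt hp0), Real.rpow_one]
  have hMminv : Mm ^ (-p) = ((m:ℝ) * hh)⁻¹ := by
    rw [Real.rpow_neg hMm0.le, hMp]
  have hMm2 : 2 ≤ Mm := by
    have h1 : (2:ℝ) ≤ (m:ℝ) * hh := le_trans hm2 (le_mul_of_one_le_right hm0.le hh1)
    calc (2:ℝ) = 2 ^ (1:ℝ) := (Real.rpow_one 2).symm
      _ ≤ 2 ^ (1 / p) := Real.rpow_le_rpow_of_exponent_le one_le_two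
          (by rw [le_div_iff₀ hp0]; linarith)
      _ ≤ ((m:ℝ) * hh) ^ (1 / p) := Real.rpow_le_rpow (by norm_num) h1 (by positivity)
  have hrm : r * m ≤ Mm := by
    have h1 : (m:ℝ) ^ (1 / p) ≤ Mm := by
      rw [hMmdef]
      exact Real.rpow_le_rpow hm0.le (le_mul_of_one_le_right hm0.le hh1) (by positivity)
    have h2 : (m:ℝ) ^ (1 / p) = (m:ℝ) * (m:ℝ) ^ ((3 - τ) / p) := by
      have he : 1 / p = 1 + (3 - τ) / p := by
        have h1 : (1:ℝ) + (3 - τ) / p = (p + (3 - τ)) / p := by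
          rw [add_div, div_self (ne_of_gt hp0)]
        rw [h1, show p + (3 - τ) = 1 by rw [hpdef]; ring]
      rw [he, Real.rpow_add hm0, Real.rpow_one]
    have h3 : r ≤ (m:ℝ) ^ ((3 - τ) / p) := by
      rw [hrdef]
      exact Real.rpow_le_rpow (by norm_num) hm2 (by positivity)
    calc r * (m:ℝ) ≤ (m:ℝ) ^ ((3 - τ) / p) * m := mul_le_mul_of_nonneg_right h3 hm0.le
      _ = (m:ℝ) ^ (1 / p) := by rw [h2]; ring
      _ ≤ Mm := h1
  have hmM : (m:ℝ) < Mm := lt_of_lt_of_le ((lt_mul_iff_one_lt_left hm0).2 hr1) hrm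
  have hMmm0 : 0 < Mm - m := by linarith
  have hMfrac : Mm / (Mm - m) ≤ r / (r - 1) := by
    rw [div_le_div_iff₀ hMmm0 (by linarith)]
    ring_nf
    nlinarith [hrm]
  -- the truncated shifted variables
  set Z : Fin m → Ω → ℝ := fun i ω => if X i ω < Mm then max (X i ω - 1) 0 else 0 with hZdef
  have hZmeas : ∀ i, Measurable (Z i) := fun i =>
    Measurable.ite (measurableSet_lt (hXmeas i) measurable_const)
      (((hXmeas i).sub measurable_const).max measurable_const) measurable_const
  have hZnn : ∀ i ω, 0 ≤ Z i ω := by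
    intro i ω
    simp only [hZdef]
    split <;> simp [le_max_right]
  set N : ℕ := ⌊Mm⌋₊ with hNdef
  have hNle : (N:ℝ) ≤ Mm := Nat.floor_le (by linarith)
  have hZnat : ∀ i ω, ∃ z : ℕ, Z i ω = z ∧ z ≤ N := by
    intro i ω
    obtain ⟨n, hn⟩ := hXnat i ω
    by_cases hlt : X i ω < Mm
    · refine ⟨n - 1, ?_, ?_⟩
      · simp only [hZdef, if_pos hlt, hn]
        rcases Nat.eq_zero_or_pos n with h0 | h1
        · subst h0; norm_num
        · have h1' : (1:ℝ) ≤ (n:ℝ) := by exact_mod_cast h1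
          rw [max_eq_left (by linarith : (0:ℝ) ≤ (n:ℝ) - 1)]
          rw [Nat.cast_sub h1, Nat.cast_one]
      · apply Nat.le_floor
        have h1 : (n:ℝ) < Mm := by rw [← hn]; exact hlt
        have h2 : ((n - 1 : ℕ):ℝ) ≤ (n:ℝ) := by exact_mod_cast Nat.sub_le n 1
        linarith
    · exact ⟨0, by simp only [hZdef, if_neg hlt]; norm_num, Nat.zero_le N⟩
  -- event inclusion
  have hincl : {ω | Mm ≤ ∑ i, X i ω} ⊆
      (⋃ i, {ω | Mm / 2 < X i ω}) ∪ {ω | Mm - m ≤ ∑ i, Z i ω} := by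
    intro ω hω
    simp only [Set.mem_setOf_eq] at hω
    by_cases hex : ∃ i, Mm ≤ X i ω
    · left
      obtain ⟨i, hi⟩ := hex
      exact Set.mem_iUnion.2 ⟨i, by simp only [Set.mem_setOf_eq]; linarith⟩
    · right
      push_neg at hex
      have hZX : ∀ i, X i ω - 1 ≤ Z i ω := by
        intro i
        simp only [hZdef, if_pos (hex i)]
        exact le_max_left _ _
      have hsum : ∑ i, (X i ω - 1) ≤ ∑ i, Z i ω :=
        Finset.sum_le_sum fun i _ => hZX i
      rw [Finset.sum_sub_distrib, Finset.sum_const, Finset.card_univ, Fintype.card_fin,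
        nsmul_eq_mul, mul_one] at hsum
      simp only [Set.mem_setOf_eq]
      linarith
  -- second-inequality real chain (valid regardless of sign of L Mm)
  have hsecond : (C'' + 1) * L Mm / hh ≤
      ((C'' + 1) * Real.exp (B * (2 + s₀))) * Real.exp (-(A / 4) * t ^ η) := by
    have hLle : L Mm ≤ Real.exp (C * (Real.log Mm) ^ η) := hLexp Mm (by linarith)
    have hlogm : Real.log (m:ℝ) = t := rfl
    have hlogM : Real.log Mm = (t + A * t ^ η) / p := by
      rw [hMmdef, Real.log_rpow hmh0, Real.log_mul (ne_of_gt hm0) (ne_of_gt hh0), hhdef,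
        Real.log_exp, hlogm]
      ring
    have hexpbd : C * (Real.log Mm) ^ η ≤ (A / 2) * t ^ η + ((A / 4) * t ^ η + B * (2 + s₀)) := by
      rw [hlogM, Real.div_rpow (by positivity) hp0.le]
      have h2 : (t + A * t ^ η) ^ η ≤ t ^ η + (A * t ^ η) ^ η :=
        aux_rpow_add_le ht0.le (by positivity) hη0.le hη1.le
      have h3 : (A * t ^ η) ^ η = A ^ η * (t ^ η) ^ η :=
        Real.mul_rpow hA0.le (by positivity)
      have hyoung : B * (t ^ η) ^ η ≤ (A / 4) * t ^ η + B * (2 + s₀) := by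
        rw [hs₀def]
        exact aux_young hB0 (by positivity) (by positivity) hη0 hη1
      have htη0 : (0:ℝ) ≤ t ^ η := by positivity
      calc C * ((t + A * t ^ η) ^ η / p ^ η) = G * (t + A * t ^ η) ^ η := by
            rw [hGdef]; ring
        _ ≤ G * (t ^ η + A ^ η * (t ^ η) ^ η) := by
            apply mul_le_mul_of_nonneg_left _ hG0.le
            rw [← h3]; exact h2
        _ = G * t ^ η + B * (t ^ η) ^ η := by rw [hBdef]; ring
        _ ≤ (A / 2) * t ^ η + ((A / 4) * t ^ η + B * (2 + s₀)) :=
            add_le_add (mul_le_mul_of_nonneg_right hGA htη0) hyoung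
    calc (C'' + 1) * L Mm / hh ≤ (C'' + 1) * Real.exp (C * (Real.log Mm) ^ η) / hh := by
          gcongr
      _ = (C'' + 1) * Real.exp (C * (Real.log Mm) ^ η - A * t ^ η) := by
          rw [Real.exp_sub, hhdef]; ring
      _ ≤ (C'' + 1) * Real.exp ((A / 2) * t ^ η + ((A / 4) * t ^ η + B * (2 + s₀)) - A * t ^ η) := by
          gcongr
      _ = ((C'' + 1) * Real.exp (B * (2 + s₀))) * Real.exp (-(A / 4) * t ^ η) := by
          have hee : Real.exp (B * (2 + s₀)) * Real.exp (-(A / 4) * t ^ η)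
              = Real.exp ((A / 2) * t ^ η + ((A / 4) * t ^ η + B * (2 + s₀)) - A * t ^ η) := by
            rw [← Real.exp_add]
            congr 1
            ring
          conv_rhs => rw [mul_assoc, hee]
  -- first inequality
  have hfirst : μ {ω | Mm ≤ ∑ i, X i ω} ≤ ENNReal.ofReal ((C'' + 1) * L Mm / hh) := by
    by_cases hL : 0 ≤ L Mm
    · -- main case
      have hMm1 : (1:ℝ) ≤ Mm / 2 := by linarith
      have hLhh : 0 ≤ L Mm / hh := div_nonneg hL hh0.le
      -- union-bound part
      have hhalf : (Mm / 2) ^ (-p) = Mm ^ (-p) * 2 ^ p := by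
        rw [Real.div_rpow hMm0.le (by norm_num : (0:ℝ) ≤ 2),
          Real.rpow_neg (by norm_num : (0:ℝ) ≤ 2)]
        field_simp
      have hreal1 : (m:ℝ) * (L Mm * (Mm / 2) ^ (-p)) = 2 ^ p * L Mm / hh := by
        rw [hhalf, hMminv]
        field_simp
      have hS1 : μ (⋃ i, {ω | Mm / 2 < X i ω})
          ≤ ENNReal.ofReal ((2:ℝ) ^ p * L Mm / hh) := by
        have heach : ∀ i : Fin m, μ {ω | Mm / 2 < X i ω}
            ≤ ENNReal.ofReal (L Mm * (Mm / 2) ^ (-p)) := by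
          intro i
          refine (htail i (Mm / 2) hMm1).trans (ENNReal.ofReal_le_ofReal ?_)
          have hmono : L (Mm / 2) ≤ L Mm :=
            hLmono (Set.mem_Ici.2 hMm1) (Set.mem_Ici.2 (by linarith)) (by linarith)
          exact mul_le_mul_of_nonneg_right hmono (Real.rpow_nonneg (by linarith) _)
        calc μ (⋃ i, {ω | Mm / 2 < X i ω}) ≤ ∑ i, μ {ω | Mm / 2 < X i ω} :=
              measure_iUnion_fintype_le μ _
          _ ≤ ∑ _i : Fin m, ENNReal.ofReal (L Mm * (Mm / 2) ^ (-p)) :=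
              Finset.sum_le_sum fun i _ => heach i
          _ = (m : ℝ≥0∞) * ENNReal.ofReal (L Mm * (Mm / 2) ^ (-p)) := by
              rw [Finset.sum_const, Finset.card_univ, Fintype.card_fin, nsmul_eq_mul]
          _ = ENNReal.ofReal ((m:ℝ) * (L Mm * (Mm / 2) ^ (-p))) := by
              rw [ENNReal.ofReal_mul (by positivity : (0:ℝ) ≤ (m:ℝ)), ENNReal.ofReal_natCast]
          _ = ENNReal.ofReal ((2:ℝ) ^ p * L Mm / hh) := by rw [hreal1]
      -- Markov part
      have hint : ∀ i : Fin m, ∫⁻ ω, ENNReal.ofReal (Z i ω) ∂μ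
          ≤ ENNReal.ofReal (L Mm * (Mm ^ (3 - τ) / (3 - τ))) := by
        intro i
        refine (aux_layer μ (Z i) (hZmeas i) N (hZnat i)).trans ?_
        have hterm : ∀ k ∈ Finset.range N, μ {ω | (k:ℝ) < Z i ω}
            ≤ ENNReal.ofReal (L Mm * ((k:ℝ) + 1) ^ (-p)) := by
          intro k hk
          rw [Finset.mem_range] at hk
          have hsub : {ω | (k:ℝ) < Z i ω} ⊆ {ω | (k:ℝ) + 1 < X i ω} := by
            intro ω hω
            simp only [Set.mem_setOf_eq] at hω ⊢
            simp only [hZdef] at hω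
            have hk0 : (0:ℝ) ≤ (k:ℝ) := Nat.cast_nonneg k
            by_cases hlt : X i ω < Mm
            · rw [if_pos hlt] at hω
              rcases le_or_gt (X i ω - 1) 0 with hle | hgt
              · rw [max_eq_right hle] at hω; linarith
              · rw [max_eq_left hgt.le] at hω; linarith
            · rw [if_neg hlt] at hω; linarith
          have hk1 : (1:ℝ) ≤ (k:ℝ) + 1 := by
            have := Nat.cast_nonneg (α := ℝ) k
            linarith
          have hkM : (k:ℝ) + 1 ≤ Mm := by
            have h1 : ((k + 1 : ℕ):ℝ) ≤ (N:ℝ) := by exact_mod_cast Nat.succ_le_of_lt hk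
            push_cast at h1
            linarith
          refine (measure_mono hsub).trans ((htail i _ hk1).trans
            (ENNReal.ofReal_le_ofReal ?_))
          exact mul_le_mul_of_nonneg_right
            (hLmono (Set.mem_Ici.2 hk1) (Set.mem_Ici.2 (by linarith)) hkM)
            (Real.rpow_nonneg (by positivity) _)
        have hsumreal : ∑ k ∈ Finset.range N, L Mm * ((k:ℝ) + 1) ^ (-p)
            ≤ L Mm * (Mm ^ (3 - τ) / (3 - τ)) := by
          rw [← Finset.mul_sum]
          apply mul_le_mul_of_nonneg_left _ hL
          refine (aux_sum_rpow hp0 hp1 N).trans ?_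
          have h1p : 1 - p = 3 - τ := by rw [hpdef]; ring
          rw [h1p]
          gcongr
        calc ∑ k ∈ Finset.range N, μ {ω | (k:ℝ) < Z i ω}
            ≤ ∑ k ∈ Finset.range N, ENNReal.ofReal (L Mm * ((k:ℝ) + 1) ^ (-p)) :=
              Finset.sum_le_sum hterm
          _ = ENNReal.ofReal (∑ k ∈ Finset.range N, L Mm * ((k:ℝ) + 1) ^ (-p)) :=
              (ENNReal.ofReal_sum_of_nonneg fun k _ =>
                mul_nonneg hL (Real.rpow_nonneg (by positivity) _)).symm
          _ ≤ ENNReal.ofReal (L Mm * (Mm ^ (3 - τ) / (3 - τ))) :=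
              ENNReal.ofReal_le_ofReal hsumreal
      have hmarkov : μ {ω | Mm - m ≤ ∑ i, Z i ω}
          ≤ ENNReal.ofReal ((m:ℝ) * (L Mm * (Mm ^ (3 - τ) / (3 - τ))) / (Mm - m)) := by
        have hfm : Measurable fun ω => ∑ i, ENNReal.ofReal (Z i ω) :=
          Finset.measurable_sum _ fun i _ => (hZmeas i).ennreal_ofReal
        have hsub : {ω | Mm - m ≤ ∑ i, Z i ω} ⊆
            {ω | ENNReal.ofReal (Mm - m) ≤ ∑ i, ENNReal.ofReal (Z i ω)} := by
          intro ω hω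
          simp only [Set.mem_setOf_eq] at hω ⊢
          calc ENNReal.ofReal (Mm - m) ≤ ENNReal.ofReal (∑ i, Z i ω) :=
                ENNReal.ofReal_le_ofReal hω
            _ = ∑ i, ENNReal.ofReal (Z i ω) :=
                ENNReal.ofReal_sum_of_nonneg fun i _ => hZnn i ω
        have hsum : ∑ i : Fin m, ∫⁻ ω, ENNReal.ofReal (Z i ω) ∂μ
            ≤ (m : ℝ≥0∞) * ENNReal.ofReal (L Mm * (Mm ^ (3 - τ) / (3 - τ))) := by
          calc ∑ i : Fin m, ∫⁻ ω, ENNReal.ofReal (Z i ω) ∂μ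
              ≤ ∑ _i : Fin m, ENNReal.ofReal (L Mm * (Mm ^ (3 - τ) / (3 - τ))) :=
                Finset.sum_le_sum fun i _ => hint i
            _ = (m : ℝ≥0∞) * ENNReal.ofReal (L Mm * (Mm ^ (3 - τ) / (3 - τ))) := by
                rw [Finset.sum_const, Finset.card_univ, Fintype.card_fin, nsmul_eq_mul]
        calc μ {ω | Mm - m ≤ ∑ i, Z i ω}
            ≤ μ {ω | ENNReal.ofReal (Mm - m) ≤ ∑ i, ENNReal.ofReal (Z i ω)} :=
              measure_mono hsub
          _ ≤ (∫⁻ ω, ∑ i, ENNReal.ofReal (Z i ω) ∂μ) / ENNReal.ofReal (Mm - m) :=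
              meas_ge_le_lintegral_div hfm.aemeasurable
                (by simp only [ne_eq, ENNReal.ofReal_eq_zero, not_le]; linarith) ENNReal.ofReal_ne_top
          _ = (∑ i : Fin m, ∫⁻ ω, ENNReal.ofReal (Z i ω) ∂μ) / ENNReal.ofReal (Mm - m) := by
              rw [lintegral_finset_sum _ fun i _ => (hZmeas i).ennreal_ofReal]
          _ ≤ ((m : ℝ≥0∞) * ENNReal.ofReal (L Mm * (Mm ^ (3 - τ) / (3 - τ)))) /
                ENNReal.ofReal (Mm - m) := ENNReal.div_le_div_right hsum _
          _ = ENNReal.ofReal ((m:ℝ) * (L Mm * (Mm ^ (3 - τ) / (3 - τ)))) /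
                ENNReal.ofReal (Mm - m) := by
              rw [ENNReal.ofReal_mul (by positivity : (0:ℝ) ≤ (m:ℝ)), ENNReal.ofReal_natCast]
          _ = ENNReal.ofReal ((m:ℝ) * (L Mm * (Mm ^ (3 - τ) / (3 - τ))) / (Mm - m)) :=
              (ENNReal.ofReal_div_of_pos hMmm0).symm
      have hreal2 : (m:ℝ) * (L Mm * (Mm ^ (3 - τ) / (3 - τ))) / (Mm - m)
          ≤ 1 / (3 - τ) * (r / (r - 1)) * L Mm / hh := by
        have hMq : Mm ^ (3 - τ) = Mm * Mm ^ (-p) := by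
          rw [show (3 - τ) = 1 + -p by rw [hpdef]; ring, Real.rpow_add hMm0, Real.rpow_one]
        have hid : (m:ℝ) * (L Mm * (Mm ^ (3 - τ) / (3 - τ))) / (Mm - m)
            = L Mm / (3 - τ) * (Mm / (Mm - m)) / hh := by
          rw [hMq, hMminv]
          field_simp
        rw [hid, show 1 / (3 - τ) * (r / (r - 1)) * L Mm / hh
            = L Mm / (3 - τ) * (r / (r - 1)) / hh by ring]
        have h2 : L Mm / (3 - τ) * (Mm / (Mm - m)) ≤ L Mm / (3 - τ) * (r / (r - 1)) :=
          mul_le_mul_of_nonneg_left hMfrac (div_nonneg hL hq0.le)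
        exact div_le_div_of_nonneg_right h2 hh0.le
      calc μ {ω | Mm ≤ ∑ i, X i ω}
          ≤ μ ((⋃ i, {ω | Mm / 2 < X i ω}) ∪ {ω | Mm - m ≤ ∑ i, Z i ω}) :=
            measure_mono hincl
        _ ≤ μ (⋃ i, {ω | Mm / 2 < X i ω}) + μ {ω | Mm - m ≤ ∑ i, Z i ω} :=
            measure_union_le _ _
        _ ≤ ENNReal.ofReal ((2:ℝ) ^ p * L Mm / hh)
              + ENNReal.ofReal (1 / (3 - τ) * (r / (r - 1)) * L Mm / hh) :=
            add_le_add hS1 (hmarkov.trans (ENNReal.ofReal_le_ofReal hreal2))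
        _ = ENNReal.ofReal ((2:ℝ) ^ p * L Mm / hh
              + 1 / (3 - τ) * (r / (r - 1)) * L Mm / hh) :=
            (ENNReal.ofReal_add (div_nonneg (mul_nonneg h2p0.le hL) hh0.le)
              (div_nonneg (mul_nonneg (mul_nonneg (div_nonneg zero_le_one hq0.le)
                (div_nonneg (by linarith) (by linarith))) hL) hh0.le)).symm
        _ ≤ ENNReal.ofReal ((C'' + 1) * L Mm / hh) := by
            apply ENNReal.ofReal_le_ofReal
            have he : (2:ℝ) ^ p * L Mm / hh + 1 / (3 - τ) * (r / (r - 1)) * L Mm / hh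
                = C'' * (L Mm / hh) := by rw [hC''def]; ring
            rw [he, show (C'' + 1) * L Mm / hh = (C'' + 1) * (L Mm / hh) by ring]
            exact mul_le_mul_of_nonneg_right (by linarith) hLhh
    · -- L Mm < 0 : the tail is zero, all X_i ≤ 1 a.s., sum < Mm a.s.
      push_neg at hL
      have hz : μ {ω | Mm ≤ ∑ i, X i ω} = 0 := by
        have hsub : {ω | Mm ≤ ∑ i, X i ω} ⊆ ⋃ i, {ω | (1:ℝ) < X i ω} := by
          intro ω hω
          by_contra hc
          simp only [Set.mem_iUnion, Set.mem_setOf_eq, not_exists, not_lt] at hc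
          have hs : ∑ i, X i ω ≤ ∑ _i : Fin m, (1:ℝ) :=
            Finset.sum_le_sum fun i _ => hc i
          rw [Finset.sum_const, Finset.card_univ, Fintype.card_fin, nsmul_eq_mul, mul_one] at hs
          simp only [Set.mem_setOf_eq] at hω
          linarith
        have hone : ∀ i : Fin m, μ {ω | (1:ℝ) < X i ω} = 0 := by
          intro i
          have := htail i 1 le_rfl
          have hL1 : L 1 ≤ L Mm := hLmono (Set.mem_Ici.2 le_rfl) (Set.mem_Ici.2 (by linarith))
            (by linarith)
          have : μ {ω | (1:ℝ) < X i ω} ≤ ENNReal.ofReal (L 1 * 1 ^ (-p)) := this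
          rw [Real.one_rpow, mul_one] at this
          have h0 : ENNReal.ofReal (L 1) = 0 := ENNReal.ofReal_eq_zero.2 (by linarith)
          exact le_antisymm (h0 ▸ this) zero_le
        refine le_antisymm ?_ zero_le
        calc μ {ω | Mm ≤ ∑ i, X i ω} ≤ μ (⋃ i, {ω | (1:ℝ) < X i ω}) := measure_mono hsub
          _ ≤ ∑ i, μ {ω | (1:ℝ) < X i ω} := measure_iUnion_fintype_le μ _
          _ = 0 := by simp [hone]
      rw [hz]; exact zero_le
  exact ⟨hfirst, hfirst.trans (ENNReal.ofReal_le_ofReal hsecond)⟩
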